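/- If γ + ρη < q/2, then for y, c, s as in Dilithium's rejection sampling (‖y‖_∞ ≤ γ, c ternary with weight ρ, ‖s‖_∞ ≤ η), computing z = y + c·s in Z_q[X]/(X^n+1) with centered representatives in (-q/2, q/2] yields the same result as computing it over Z[X]/(X^n+1), i.e., no modular reduction occurs. -/
import Mathlib


open Polynomial

open Finset in
lemma mod_Xn_coeff (n : ℕ) (hn : 1 ≤ n) (p : Polynomial ℤ) (hp : p.degree < 2*n)
    (i : ℕ) (hi : i < n) :
    (p %ₘ (X^n + 1)).coeff i = p.coeff i - p.coeff (n+i) := by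
  have hmonic : (X^n + 1 : Polynomial ℤ).Monic := by
    simpa using monic_X_pow_add_C (1:ℤ) (by omega)
  set r : Polynomial ℤ := ∑ j ∈ range n, monomial j (p.coeff j - p.coeff (n+j)) with hr
  set q' : Polynomial ℤ := ∑ j ∈ range n, monomial j (p.coeff (n+j)) with hq'
  have hrc : ∀ m, r.coeff m = if m < n then p.coeff m - p.coeff (n+m) else 0 := by
    intro m
    simp only [hr, finset_sum_coeff, coeff_monomial, Finset.sum_ite_eq', Finset.mem_range]
  have hqc : ∀ m, q'.coeff m = if m < n then p.coeff (n+m) else 0 := by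
    intro m
    simp [hq', finset_sum_coeff, coeff_monomial, Finset.sum_ite_eq', Finset.mem_range]
  have hpz : ∀ m, 2*n ≤ m → p.coeff m = 0 := by
    intro m hm
    apply coeff_eq_zero_of_degree_lt
    exact lt_of_lt_of_le hp (by exact_mod_cast hm)
  have key : p %ₘ (X^n+1) = r := by
    refine (div_modByMonic_unique q' r hmonic ⟨?_, ?_⟩).2
    · ext m
      rw [coeff_add, hrc m, add_mul, one_mul, coeff_add, mul_comm, coeff_mul_X_pow']
      rcases lt_or_ge m n with h1 | h1
      · rw [if_pos h1, if_neg (by omega), hqc m, if_pos h1]; ring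
      · rw [if_neg (by omega), if_pos h1, hqc m, if_neg (by omega), hqc (m-n)]
        rcases lt_or_ge (m-n) n with h2 | h2
        · rw [if_pos h2]; rw [show n + (m-n) = m by omega]; ring
        · rw [if_neg (by omega), hpz m (by omega)]; ring
    · rw [show ((X:Polynomial ℤ)^n + 1) = X^n + C 1 by simp, degree_X_pow_add_C (by omega)]
      rw [degree_lt_iff_coeff_zero]
      intro m hm
      rw [hrc m, if_neg (by exact_mod_cast not_lt.mpr (by exact_mod_cast hm))]
  rw [key, hrc i, if_pos hi]

/-- If `γ + ρη < q/2`, then all coefficients of `z = y + c·s mod (X^n+1)`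
computed over `ℤ` already lie in the centered interval `(-q/2, q/2]`, so
computing `z` in `ℤ_q[X]/(X^n+1)` with centered representatives yields the
same result: no modular reduction occurs. -/
theorem rejection_sample_no_reduction (n : ℕ) (hn : 1 ≤ n) (ρ : ℕ) (γ η : ℤ)
    (q : ℕ) (hq : 0 < q) (hbound : (γ : ℚ) + (ρ : ℚ) * (η : ℚ) < (q : ℚ) / 2)
    (y c s : Polynomial ℤ)
    (hy : y.degree < n) (hc : c.degree < n) (hs : s.degree < n)
    (hyb : ∀ i : ℕ, |y.coeff i| ≤ γ)
    (hcter : ∀ i : ℕ, c.coeff i = 0 ∨ c.coeff i = 1 ∨ c.coeff i = -1)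
    (hcwt : c.support.card = ρ)
    (hsb : ∀ i : ℕ, |s.coeff i| ≤ η) :
    ∀ i : ℕ,
      -(q : ℚ) / 2 < (((y + c * s) %ₘ (X ^ n + 1)).coeff i : ℚ) ∧
        (((y + c * s) %ₘ (X ^ n + 1)).coeff i : ℚ) ≤ (q : ℚ) / 2 := by
  have hmonic : (X^n + 1 : Polynomial ℤ).Monic := by
    simpa using monic_X_pow_add_C (1:ℤ) (by omega)
  have hdegM : ((X:Polynomial ℤ)^n + 1).degree = n := by
    rw [show ((X:Polynomial ℤ)^n + 1) = X^n + C 1 by simp]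
    exact degree_X_pow_add_C (by omega) 1
  have hηnn : (0:ℤ) ≤ η := le_trans (abs_nonneg _) (hsb 0)
  have hsz : ∀ m, n ≤ m → s.coeff m = 0 := fun m hm =>
    coeff_eq_zero_of_degree_lt (lt_of_lt_of_le hs (by exact_mod_cast hm))
  have hyz : ∀ m, n ≤ m → y.coeff m = 0 := fun m hm =>
    coeff_eq_zero_of_degree_lt (lt_of_lt_of_le hy (by exact_mod_cast hm))
  -- coefficients of c*s as a sum over support of c
  have hcs : ∀ m, (c*s).coeff m
      = ∑ j ∈ c.support, c.coeff j * (if j ≤ m then s.coeff (m-j) else 0) := by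
    intro m
    conv_lhs => rw [c.as_sum_support, Finset.sum_mul]
    rw [finset_sum_coeff]
    refine Finset.sum_congr rfl fun j hj => ?_
    rw [← C_mul_X_pow_eq_monomial, mul_assoc, coeff_C_mul,
      mul_comm ((X:Polynomial ℤ)^j) s, coeff_mul_X_pow']
  intro i
  rcases le_or_gt n i with hi | hi
  · -- high coefficients of the remainder are zero
    have : ((y + c*s) %ₘ (X^n+1)).coeff i = 0 := by
      apply coeff_eq_zero_of_degree_lt
      calc ((y + c*s) %ₘ (X^n+1)).degree < ((X:Polynomial ℤ)^n+1).degree :=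
            degree_modByMonic_lt _ hmonic
        _ ≤ i := by rw [hdegM]; exact_mod_cast hi
    rw [this]
    have hq2 : (0:ℚ) < (q:ℚ)/2 := by positivity
    constructor <;> push_cast <;> [linarith; linarith]
  · -- main case : i < n
    have hdeg2 : (y + c*s).degree < (2*n : ℕ) := by
      apply lt_of_le_of_lt (degree_add_le _ _)
      rw [max_lt_iff]
      refine ⟨lt_of_lt_of_le hy (by exact_mod_cast (by omega : n ≤ 2*n)), ?_⟩
      apply lt_of_le_of_lt (degree_mul_le _ _)
      have h1 : c.degree ≤ (n-1 : ℕ) := by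
        rcases eq_or_ne c 0 with h | h
        · simp [h]
        · rw [degree_eq_natDegree h] at hc ⊢
          exact_mod_cast Nat.le_sub_one_of_lt (by exact_mod_cast hc)
      have h2 : s.degree ≤ (n-1 : ℕ) := by
        rcases eq_or_ne s 0 with h | h
        · simp [h]
        · rw [degree_eq_natDegree h] at hs ⊢
          exact_mod_cast Nat.le_sub_one_of_lt (by exact_mod_cast hs)
      calc c.degree + s.degree ≤ ((n-1 : ℕ) : WithBot ℕ) + ((n-1:ℕ) : WithBot ℕ) :=
            add_le_add h1 h2
        _ = ((n-1 + (n-1) : ℕ) : WithBot ℕ) := by push_cast; ring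
        _ < (2*n : ℕ) := by exact_mod_cast (by omega : n-1+(n-1) < 2*n)
    have hcoeff := mod_Xn_coeff n hn (y + c*s) hdeg2 i hi
    rw [coeff_add, coeff_add, hyz (n+i) (by omega)] at hcoeff
    -- bound the convolution difference
    have hD : |(c*s).coeff i - (c*s).coeff (n+i)| ≤ (ρ:ℤ) * η := by
      rw [hcs i, hcs (n+i), ← Finset.sum_sub_distrib]
      calc |∑ j ∈ c.support, (c.coeff j * (if j ≤ i then s.coeff (i-j) else 0)
              - c.coeff j * (if j ≤ n+i then s.coeff (n+i-j) else 0))|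
          ≤ ∑ j ∈ c.support, |c.coeff j * (if j ≤ i then s.coeff (i-j) else 0)
              - c.coeff j * (if j ≤ n+i then s.coeff (n+i-j) else 0)| :=
            Finset.abs_sum_le_sum_abs _ _
        _ ≤ ∑ j ∈ c.support, η := by
            refine Finset.sum_le_sum fun j hj => ?_
            rw [← mul_sub, abs_mul]
            have hcj : |c.coeff j| = 1 := by
              rcases hcter j with h | h | h
              · exact absurd h (Polynomial.mem_support_iff.mp hj)
              · rw [h]; simp
              · rw [h]; simp
            rw [hcj, one_mul]
            split_ifs with h1 h2 h2
            · rw [hsz (n+i-j) (by omega), sub_zero]; exact hsb _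
            · omega
            · rw [zero_sub, abs_neg]; exact hsb _
            · simpa using hηnn
        _ = (ρ:ℤ) * η := by rw [Finset.sum_const, hcwt]; simp
    have hZ : |((y + c*s) %ₘ (X^n+1)).coeff i| ≤ γ + (ρ:ℤ)*η := by
      rw [hcoeff, show y.coeff i + (c*s).coeff i - (0 + (c*s).coeff (n+i))
          = y.coeff i + ((c*s).coeff i - (c*s).coeff (n+i)) from by ring]
      calc |y.coeff i + ((c*s).coeff i - (c*s).coeff (n+i))|
          ≤ |y.coeff i| + |(c*s).coeff i - (c*s).coeff (n+i)| := abs_add_le _ _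
        _ ≤ γ + (ρ:ℤ)*η := add_le_add (hyb i) hD
    have hZQ : |(((y + c*s) %ₘ (X^n+1)).coeff i : ℚ)| ≤ (γ:ℚ) + (ρ:ℚ)*(η:ℚ) := by
      have h2 : ((|((y + c*s) %ₘ (X^n+1)).coeff i| : ℤ) : ℚ) ≤ ((γ + (ρ:ℤ)*η : ℤ) : ℚ) :=
        Int.cast_le.mpr hZ
      push_cast at h2
      simpa using h2
    rw [abs_le] at hZQ
    constructor
    · linarith [hZQ.1]
    · linarith [hZQ.2]
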